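/- arXiv:math/0605470 — 4 statements merged into one kernel-verified Lean document; each statement's English description precedes it below -/
import Mathlib

section
/- Let G = (G, ε, δ) be a comonad on a category B arising from an adjunction F ⊣ U with F : A → B. The comparison functor K : A → B_G to the Eilenberg–Moore category of G-coalgebras has a right adjoint if and only if for each G-coalgebra (b, θ_b), the pair of morphisms (U(θ_b), η_{U(b)}) : U(b) ⇉ UFU(b) has an equalizer in A. -/
open CategoryTheory CategoryTheory.Limits

section Aux

variable {A : Type*} [Category A] {B : Type*} [Category B]
    {F : A ⥤ B} {U : B ⥤ A} (adj : F ⊣ U)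

lemma aux_homEquiv_Fmap {X : A} {Y : B} (g : X ⟶ U.obj Y) :
    adj.homEquiv X (F.obj (U.obj Y)) (F.map g) = g ≫ adj.unit.app (U.obj Y) := by
  rw [show F.map g = F.map g ≫ 𝟙 _ from (Category.comp_id _).symm,
    adj.homEquiv_naturality_left, Adjunction.homEquiv_id]

/-- Transposing the coalgebra-structure compatibility through the adjunction. -/
lemma aux_homEquiv_fork {X : A} (b : adj.toComonad.Coalgebra) (g : F.obj X ⟶ b.A) :
    (F.map (adj.unit.app X) ≫ F.map (U.map g) = g ≫ b.a) ↔
      (adj.homEquiv X b.A g ≫ U.map b.a = adj.homEquiv X b.A g ≫ adj.unit.app (U.obj b.A)) := by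
  erw [← (adj.homEquiv X _).apply_eq_iff_eq, adj.homEquiv_naturality_right,
    adj.homEquiv_naturality_right]
  simp only [Functor.comp_obj]
  rw [aux_homEquiv_Fmap]
  have h1 : adj.unit.app (U.obj (F.obj X)) ≫ U.map (F.map (U.map g)) =
      U.map g ≫ adj.unit.app (U.obj b.A) := (adj.unit.naturality (U.map g)).symm
  rw [Category.assoc, h1, Adjunction.homEquiv_unit, eq_comm]
  simp
  exact Iff.rfl

/-- The hom equivalence used to build the right adjoint of the comparison functor. -/
noncomputable def aux_rightAdjHomEquiv (b : adj.toComonad.Coalgebra) (X : A)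
    [HasEqualizer (U.map b.a) (adj.unit.app (U.obj b.A))] :
    ((Comonad.comparison adj).obj X ⟶ b) ≃
      (X ⟶ equalizer (U.map b.a) (adj.unit.app (U.obj b.A))) where
  toFun f := by
    refine equalizer.lift (adj.homEquiv _ _ f.f) ?_
    erw [← aux_homEquiv_fork adj b]
    exact f.h
  invFun f :=
    { f := (adj.homEquiv _ _).symm (f ≫ equalizer.ι _ _)
      h := by
        have : F.map (adj.unit.app X) ≫ F.map (U.map ((adj.homEquiv _ _).symm
            (f ≫ equalizer.ι _ _))) = (adj.homEquiv _ _).symm (f ≫ equalizer.ι _ _) ≫ b.a := by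
          erw [aux_homEquiv_fork adj b, (adj.homEquiv _ _).apply_symm_apply,
            Category.assoc, Category.assoc, equalizer.condition]
          rfl
        exact this
      }
  left_inv f := by
    apply Comonad.Coalgebra.Hom.ext
    simp
    exact (adj.homEquiv X b.A).symm_apply_apply f.f
  right_inv f := by
    apply equalizer.hom_ext
    simp
    rfl

end Aux

/-- **Beck's theorem, part 1.** For an adjunction `F ⊣ U` with induced comonad `G = FU` on `B`,
the comparison functor `K : A ⥤ B_G` to the Eilenberg–Moore category of `G`-coalgebras has a
right adjoint if and only if for each `G`-coalgebra `(b, θ_b)` the pair of morphisms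
`(U(θ_b), η_{U(b)}) : U(b) ⇉ UFU(b)` has an equalizer in `A`. -/
theorem comparison_isLeftAdjoint_iff_hasEqualizers
    {A : Type*} [Category A] {B : Type*} [Category B]
    (F : A ⥤ B) (U : B ⥤ A) (adj : F ⊣ U) :
    (Comonad.comparison adj).IsLeftAdjoint ↔
      ∀ b : adj.toComonad.Coalgebra,
        HasEqualizer (U.map b.a) (adj.unit.app (U.obj b.A)) := by
  constructor
  · intro h b
    let R := (Comonad.comparison adj).rightAdjoint
    let adj' : Comonad.comparison adj ⊣ R := Adjunction.ofIsLeftAdjoint _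
    set ι : R.obj b ⟶ U.obj b.A :=
      adj.homEquiv _ _ ((adj'.counit.app b).f) with hιdef
    -- the generic computation: composing with `ι` is transposition
    have key : ∀ {X : A} (k : X ⟶ R.obj b),
        k ≫ ι = adj.homEquiv X b.A (((adj'.homEquiv X b).symm k).f) := by
      intro X k
      erw [hιdef, Adjunction.homEquiv_counit, Adjunction.homEquiv_unit,
        Adjunction.homEquiv_unit]
      simp only [Adjunction.homEquiv_counit, Comonad.Coalgebra.comp_f]
      rw [← adj.unit_naturality_assoc]
      simp
      erw [Functor.map_comp, adj.unit_naturality_assoc]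
      rfl
    have hι : ι ≫ U.map b.a = ι ≫ adj.unit.app (U.obj b.A) := by
      erw [hιdef, ← aux_homEquiv_fork adj b]
      have := (adj'.counit.app b).h
      dsimp at this ⊢
      exact this
    refine HasLimit.mk ⟨Fork.ofι ι hι, Fork.IsLimit.mk _ (fun s => ?_) (fun s => ?_)
      (fun s m hm => ?_)⟩
    · refine adj'.homEquiv s.pt b ⟨(adj.homEquiv s.pt b.A).symm s.ι, ?_⟩
      have : F.map (adj.unit.app s.pt) ≫ F.map (U.map ((adj.homEquiv s.pt b.A).symm s.ι)) =
          (adj.homEquiv s.pt b.A).symm s.ι ≫ b.a := by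
        rw [aux_homEquiv_fork adj b, (adj.homEquiv s.pt b.A).apply_symm_apply]
        exact s.condition
      exact this
    · show _ ≫ ι = s.ι
      rw [key]
      erw [(adj'.homEquiv s.pt b).symm_apply_apply]
      exact (adj.homEquiv s.pt b.A).apply_symm_apply s.ι
    · replace hm : m ≫ ι = s.ι := hm
      have h2 : (adj'.homEquiv s.pt b) ((adj'.homEquiv s.pt b).symm m) = m :=
        (adj'.homEquiv s.pt b).apply_symm_apply m
      rw [← h2]
      congr 1
      apply Comonad.Coalgebra.Hom.ext
      apply (adj.homEquiv s.pt b.A).injective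
      rw [← key, hm, (adj.homEquiv s.pt b.A).apply_symm_apply]
  · intro h
    exact ⟨_, ⟨Adjunction.adjunctionOfEquivRight
      (fun X b => (aux_rightAdjHomEquiv adj b X))
      (fun X' X b f g => by
        apply equalizer.hom_ext
        dsimp [aux_rightAdjHomEquiv]
        erw [equalizer.lift_ι, Category.assoc, equalizer.lift_ι]
        exact adj.homEquiv_naturality_left f g.f)⟩⟩
end

section
/- Let i : B → S be an injective ring homomorphism. The subset I^l_B(S) of I_B(S) consisting of those B-subbimodules I ⊆ S for which the multiplication map m^l_I : S ⊗_B I → S, s ⊗ x ↦ sx, is bijective, is a submonoid of I_B(S). -/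
open scoped TensorProduct

set_option linter.unusedSectionVars false
set_option linter.unusedVariables false

noncomputable section

namespace Gro

variable (B : Type) [Ring B] (M N : Type) [AddCommGroup M] [AddCommGroup N]
variable (ρ : B → M →+ M) (lam : B → N →+ N)

/-- The subgroup of relations for the balanced tensor product over `B`. -/
def trel : AddSubgroup (M ⊗[ℤ] N) :=
  AddSubgroup.closure {x | ∃ (m : M) (b : B) (n : N), x = (ρ b m) ⊗ₜ[ℤ] n - m ⊗ₜ[ℤ] (lam b n)}

/-- The balanced tensor product `M ⊗_B N` of a right `B`-module and a left `B`-module,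
realized as a quotient of the tensor product of abelian groups. -/
def TP := (M ⊗[ℤ] N) ⧸ trel B M N ρ lam

instance : AddCommGroup (TP B M N ρ lam) := QuotientAddGroup.Quotient.addCommGroup _

variable {B M N}

/-- The canonical bilinear map into the balanced tensor product. -/
def tp (m : M) (n : N) : TP B M N ρ lam := QuotientAddGroup.mk (m ⊗ₜ[ℤ] n)

theorem tp_rel (b : B) (m : M) (n : N) : tp ρ lam (ρ b m) n = tp ρ lam m (lam b n) := by
  unfold tp
  exact QuotientAddGroup.eq_iff_sub_mem.2 (AddSubgroup.subset_closure ⟨m, b, n, rfl⟩)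

theorem tp_add_left (m m' : M) (n : N) :
    tp ρ lam (m + m') n = tp ρ lam m n + tp ρ lam m' n := by
  unfold tp
  rw [TensorProduct.add_tmul]; first | exact QuotientAddGroup.mk_add (N := trel B M N ρ lam) _ _ | rfl

theorem tp_add_right (m : M) (n n' : N) :
    tp ρ lam m (n + n') = tp ρ lam m n + tp ρ lam m n' := by
  unfold tp
  rw [TensorProduct.tmul_add]; first | exact QuotientAddGroup.mk_add (N := trel B M N ρ lam) _ _ | rfl

theorem tp_zero_left (n : N) : tp ρ lam (0 : M) n = 0 := by
  unfold tp; rw [TensorProduct.zero_tmul]; rfl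

theorem tp_zero_right (m : M) : tp ρ lam m (0 : N) = 0 := by
  unfold tp; rw [TensorProduct.tmul_zero]; rfl

/-- Lift a balanced biadditive map to the balanced tensor product. -/
def liftTP {P : Type} [AddCommGroup P] (f : M →+ N →+ P)
    (hf : ∀ (m : M) (b : B) (n : N), f (ρ b m) n = f m (lam b n)) :
    TP B M N ρ lam →+ P :=
  QuotientAddGroup.lift _ (TensorProduct.liftAddHom f (fun z m n => by
      simp [map_zsmul, AddMonoidHom.map_zsmul]))
    (by
      refine (AddSubgroup.closure_le _).2 ?_
      rintro x ⟨m, b, n, rfl⟩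
      simp only [SetLike.mem_coe, AddMonoidHom.mem_ker, map_sub,
        TensorProduct.liftAddHom_tmul, hf m b n, sub_self])

@[simp] theorem liftTP_tp {P : Type} [AddCommGroup P] (f : M →+ N →+ P) (hf) (m : M) (n : N) :
    liftTP ρ lam f hf (tp ρ lam m n) = f m n := rfl

/-- The canonical map as a biadditive map. -/
def tpHom : M →+ N →+ TP B M N ρ lam where
  toFun m := AddMonoidHom.mk' (fun n => tp ρ lam m n) (fun n n' => tp_add_right ρ lam m n n')
  map_zero' := by ext n; exact tp_zero_left ρ lam n
  map_add' m m' := by ext n; exact tp_add_left ρ lam m m' n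

@[simp] theorem tpHom_apply (m : M) (n : N) : tpHom ρ lam m n = tp ρ lam m n := rfl

@[elab_as_elim]
theorem tp_induction {p : TP B M N ρ lam → Prop}
    (tmul : ∀ m n, p (tp ρ lam m n)) (zero : p 0)
    (add : ∀ x y, p x → p y → p (x + y)) (neg : ∀ x, p x → p (-x)) (x : TP B M N ρ lam) : p x := by
  obtain ⟨y, rfl⟩ := QuotientAddGroup.mk_surjective x
  induction y using TensorProduct.induction_on with
  | zero => exact zero
  | tmul m n => exact tmul m n
  | add a b ha hb => rw [QuotientAddGroup.mk_add]; exact add _ _ ha hb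

theorem hom_ext {P : Type} [AddCommGroup P] {φ ψ : TP B M N ρ lam →+ P}
    (h : ∀ m n, φ (tp ρ lam m n) = ψ (tp ρ lam m n)) : φ = ψ := by
  ext x
  induction x using tp_induction ρ lam with
  | tmul m n => exact h m n
  | zero => simp
  | add a b ha hb => simp [ha, hb]
  | neg a ha => simp [ha]

end Gro
end
namespace Gro

noncomputable section

variable {B S : Type} [Ring B] [Ring S]

/-- Right action of `B` on `S` via `i`. -/
def rAct (i : B →+* S) (b : B) : S →+ S := AddMonoidHom.mulRight (i b)

/-- Left action of `B` on `S` via `i`. -/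
def lAct (i : B →+* S) (b : B) : S →+ S := AddMonoidHom.mulLeft (i b)

/-- The Sweedler coring `S ⊗_B S` of a ring extension `i : B →+* S`. -/
def Sw (i : B →+* S) : Type := TP B S S (rAct i) (lAct i)

instance (i : B →+* S) : AddCommGroup (Sw i) :=
  inferInstanceAs (AddCommGroup (TP B S S (rAct i) (lAct i)))

/-- The element `s ⊗_B t` of the Sweedler coring. -/
def swMk (i : B →+* S) (s t : S) : Sw i := tp (rAct i) (lAct i) s t

theorem swMk_rel (i : B →+* S) (b : B) (s t : S) :
    swMk i (s * i b) t = swMk i s (i b * t) :=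
  tp_rel (rAct i) (lAct i) b s t

theorem swMk_add_left (i : B →+* S) (s s' t : S) :
    swMk i (s + s') t = swMk i s t + swMk i s' t := tp_add_left _ _ _ _ _

theorem swMk_add_right (i : B →+* S) (s t t' : S) :
    swMk i s (t + t') = swMk i s t + swMk i s t' := tp_add_right _ _ _ _ _

/-- The biadditive map `(s, t) ↦ s ⊗_B t`. -/
def swMkHom (i : B →+* S) : S →+ S →+ Sw i := tpHom (rAct i) (lAct i)

/-- The left action of `S` on the Sweedler coring `S ⊗_B S`. -/
def lsmul (i : B →+* S) (s : S) : Sw i →+ Sw i :=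
  liftTP (rAct i) (lAct i) ((swMkHom i).comp (AddMonoidHom.mulLeft s))
    (by
      intro m b n
      simp only [AddMonoidHom.coe_comp, Function.comp_apply, AddMonoidHom.coe_mulLeft, swMkHom,
        tpHom_apply]
      show tp _ _ (s * (m * i b)) n = tp _ _ (s * m) (i b * n)
      rw [← mul_assoc]
      exact tp_rel (rAct i) (lAct i) b (s * m) n)

@[simp] theorem lsmul_swMk (i : B →+* S) (s a b : S) :
    lsmul i s (swMk i a b) = swMk i (s * a) b := rfl

/-- The right action of `S` on the Sweedler coring `S ⊗_B S`. -/
def rsmul (i : B →+* S) (s : S) : Sw i →+ Sw i :=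
  liftTP (rAct i) (lAct i)
    (AddMonoidHom.mk' (fun a => (swMkHom i a).comp (AddMonoidHom.mulRight s)) (by
      intro a a'
      ext t
      simp only [swMkHom, AddMonoidHom.coe_comp, Function.comp_apply, tpHom_apply,
        AddMonoidHom.add_apply, AddMonoidHom.coe_mulRight]
      exact tp_add_left _ _ _ _ _))
    (by
      intro m b n
      show tp _ _ (m * i b) (n * s) = tp _ _ m ((i b * n) * s)
      rw [mul_assoc]
      exact tp_rel (rAct i) (lAct i) b m (n * s))

@[simp] theorem rsmul_swMk (i : B →+* S) (s a b : S) :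
    rsmul i s (swMk i a b) = swMk i a (b * s) := rfl

/-- The counit of the Sweedler coring, induced by multiplication. -/
def swCounit (i : B →+* S) : Sw i →+ S :=
  liftTP (rAct i) (lAct i) AddMonoidHom.mul (by
    intro m b n
    simp only [AddMonoidHom.mul_apply]
    show m * i b * n = m * (i b * n)
    rw [mul_assoc])

@[simp] theorem swCounit_swMk (i : B →+* S) (a b : S) : swCounit i (swMk i a b) = a * b := rfl

/-- The cotensor square `C ⊗_S C` of the Sweedler coring `C = S ⊗_B S`. -/
def T2 (i : B →+* S) : Type := TP S (Sw i) (Sw i) (rsmul i) (lsmul i)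

instance (i : B →+* S) : AddCommGroup (T2 i) :=
  inferInstanceAs (AddCommGroup (TP S (Sw i) (Sw i) (rsmul i) (lsmul i)))

/-- The element `x ⊗_S y` of `C ⊗_S C`. -/
def t2Mk (i : B →+* S) (x y : Sw i) : T2 i := tp (rsmul i) (lsmul i) x y

/-- The comultiplication of the Sweedler coring: `s ⊗_B t ↦ (s ⊗_B 1) ⊗_S (1 ⊗_B t)`. -/
def swComul (i : B →+* S) : Sw i →+ T2 i :=
  liftTP (rAct i) (lAct i)
    (AddMonoidHom.mk'
      (fun s => (tpHom (rsmul i) (lsmul i) (swMk i s 1)).comp (swMkHom i 1)) (by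
        intro s s'
        ext t
        simp only [AddMonoidHom.coe_comp, Function.comp_apply, AddMonoidHom.add_apply,
          tpHom_apply]
        rw [swMk_add_left]
        exact tp_add_left _ _ _ _ _))
    (by
      intro m b n
      show t2Mk i (swMk i (m * i b) 1) (swMk i 1 n) = t2Mk i (swMk i m 1) (swMk i 1 (i b * n))
      have h1 : swMk i (m * i b) 1 = rsmul i (i b) (swMk i m 1) := by
        rw [rsmul_swMk, one_mul, swMk_rel, mul_one]
      have h2 : swMk i 1 (i b * n) = lsmul i (i b) (swMk i 1 n) := by
        rw [lsmul_swMk, mul_one, ← swMk_rel, one_mul]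
      rw [h1, h2]
      exact tp_rel (rsmul i) (lsmul i) (i b) (swMk i m 1) (swMk i 1 n))

@[simp] theorem swComul_swMk (i : B →+* S) (s t : S) :
    swComul i (swMk i s t) = t2Mk i (swMk i s 1) (swMk i 1 t) := rfl

/-- The induced endomorphism `g ⊗_S g` of `C ⊗_S C`, for an `S`-bimodule map `g`. -/
def gg (i : B →+* S) (g : Sw i →+ Sw i)
    (hl : ∀ s x, g (lsmul i s x) = lsmul i s (g x))
    (hr : ∀ s x, g (rsmul i s x) = rsmul i s (g x)) : T2 i →+ T2 i :=
  liftTP (rsmul i) (lsmul i)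
    (AddMonoidHom.mk' (fun c => (tpHom (rsmul i) (lsmul i) (g c)).comp g) (by
      intro c c'
      ext d
      simp [map_add]
      rfl))
    (by
      intro m s n
      show t2Mk i (g (rsmul i s m)) (g n) = t2Mk i (g m) (g (lsmul i s n))
      rw [hr, hl]
      exact tp_rel (rsmul i) (lsmul i) s (g m) (g n))

@[simp] theorem gg_t2Mk (i : B →+* S) (g : Sw i →+ Sw i) (hl hr) (x y : Sw i) :
    gg i g hl hr (t2Mk i x y) = t2Mk i (g x) (g y) := rfl

/-- A coring endomorphism of the Sweedler coring `S ⊗_B S`: an `S`-bimodule map commuting with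
the comultiplication and the counit. -/
def IsCoringEnd (i : B →+* S) (g : Sw i →+ Sw i) : Prop :=
  (∀ x, swCounit i (g x) = swCounit i x) ∧
    ∃ (hl : ∀ s x, g (lsmul i s x) = lsmul i s (g x))
      (hr : ∀ s x, g (rsmul i s x) = rsmul i s (g x)),
      ∀ x, swComul i (g x) = gg i g hl hr (swComul i x)

/-- A coring automorphism of the Sweedler coring. -/
def IsCoringAut (i : B →+* S) (g : Sw i →+ Sw i) : Prop :=
  IsCoringEnd i g ∧ ∃ h : Sw i →+ Sw i, IsCoringEnd i h ∧
    g.comp h = AddMonoidHom.id _ ∧ h.comp g = AddMonoidHom.id _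

end

end Gro
namespace Gro

noncomputable section

variable {B S : Type} [Ring B] [Ring S]

theorem swMk_neg_left (i : B →+* S) (a t : S) : swMk i (-a) t = -swMk i a t :=
  map_neg ((swMkHom i).flip t) a

theorem swMk_neg_right (i : B →+* S) (a t : S) : swMk i a (-t) = -swMk i a t :=
  map_neg (swMkHom i a) t

/-- A `B`-subbimodule of `S` (along the ring homomorphism `i : B →+* S`). -/
structure Sub (i : B →+* S) where
  car : AddSubgroup S
  l : ∀ (b : B) (x : S), x ∈ car → i b * x ∈ car
  r : ∀ (b : B) (x : S), x ∈ car → x * i b ∈ car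

/-- The product of two subbimodules: the additive subgroup generated by products. -/
def mulSub (i : B →+* S) (I J : Sub i) : Sub i where
  car := AddSubgroup.closure {x | ∃ a ∈ I.car, ∃ c ∈ J.car, x = a * c}
  l := by
    intro b x hx
    induction hx using AddSubgroup.closure_induction with
    | mem y hy =>
      obtain ⟨a, ha, c, hc, rfl⟩ := hy
      rw [← mul_assoc]
      exact AddSubgroup.subset_closure ⟨i b * a, I.l b a ha, c, hc, rfl⟩
    | zero => simpa using AddSubgroup.zero_mem _
    | add y z _ _ hy hz => rw [mul_add]; exact AddSubgroup.add_mem _ hy hz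
    | neg y _ hy => rw [mul_neg]; exact AddSubgroup.neg_mem _ hy
  r := by
    intro b x hx
    induction hx using AddSubgroup.closure_induction with
    | mem y hy =>
      obtain ⟨a, ha, c, hc, rfl⟩ := hy
      rw [mul_assoc]
      exact AddSubgroup.subset_closure ⟨a, ha, c * i b, J.r b c hc, rfl⟩
    | zero => simpa using AddSubgroup.zero_mem _
    | add y z _ _ hy hz => rw [add_mul]; exact AddSubgroup.add_mem _ hy hz
    | neg y _ hy => rw [neg_mul]; exact AddSubgroup.neg_mem _ hy

/-- The unit subbimodule `i(B) ⊆ S`. -/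
def oneSub (i : B →+* S) : Sub i where
  car := i.toAddMonoidHom.range
  l := by rintro b _ ⟨c, rfl⟩; exact ⟨b * c, by simp⟩
  r := by rintro b _ ⟨c, rfl⟩; exact ⟨c * b, by simp⟩

/-- An invertible subbimodule. -/
def IsInvSub (i : B →+* S) (I : Sub i) : Prop :=
  ∃ J : Sub i, mulSub i I J = oneSub i ∧ mulSub i J I = oneSub i

/-- The left action of `B` on a subbimodule. -/
def lActSub (i : B →+* S) (I : Sub i) (b : B) : I.car →+ I.car :=
  AddMonoidHom.mk' (fun x => ⟨i b * ↑x, I.l b ↑x x.2⟩) (by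
    intro x y; ext; simp [mul_add])

/-- The tensor product `S ⊗_B I` for a subbimodule `I ⊆ S`. -/
def TI (i : B →+* S) (I : Sub i) : Type := TP B S I.car (rAct i) (lActSub i I)

instance (i : B →+* S) (I : Sub i) : AddCommGroup (TI i I) :=
  inferInstanceAs (AddCommGroup (TP B S I.car (rAct i) (lActSub i I)))

/-- The element `s ⊗_B x` of `S ⊗_B I`. -/
def tiMk (i : B →+* S) (I : Sub i) (s : S) (x : I.car) : TI i I :=
  tp (rAct i) (lActSub i I) s x

/-- The multiplication map `m^l_I : S ⊗_B I → S`. -/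
def mull (i : B →+* S) (I : Sub i) : TI i I →+ S :=
  liftTP (rAct i) (lActSub i I)
    (AddMonoidHom.mk' (fun s => (AddMonoidHom.mulLeft s).comp I.car.subtype) (by
      intro s s'; ext x; simp [add_mul]))
    (by
      intro m b n
      show m * i b * ↑n = m * (i b * ↑n)
      rw [mul_assoc])

@[simp] theorem mull_tiMk (i : B →+* S) (I : Sub i) (s : S) (x : I.car) :
    mull i I (tiMk i I s x) = s * ↑x := rfl

/-- The map `S ⊗_B I → S ⊗_B S` induced by the inclusion `I ⊆ S`. -/
def inclTI (i : B →+* S) (I : Sub i) : TI i I →+ Sw i :=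
  liftTP (rAct i) (lActSub i I)
    (AddMonoidHom.mk' (fun s => (swMkHom i s).comp I.car.subtype) (by
      intro s s'; ext x
      simp only [AddMonoidHom.coe_comp, Function.comp_apply, AddMonoidHom.add_apply, swMkHom,
        tpHom_apply, AddSubgroup.coe_subtype]
      exact tp_add_left _ _ _ _ _))
    (by
      intro m b n
      exact swMk_rel i b m ↑n)

@[simp] theorem inclTI_tiMk (i : B →+* S) (I : Sub i) (s : S) (x : I.car) :
    inclTI i I (tiMk i I s x) = swMk i s ↑x := rfl

/-- The map `S ⊗_B I → S ⊗_B J` induced by an inclusion `I ⊆ J` of subbimodules. -/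
def tiMap (i : B →+* S) (I J : Sub i) (h : I.car ≤ J.car) : TI i I →+ TI i J :=
  liftTP (rAct i) (lActSub i I)
    (AddMonoidHom.mk' (fun s =>
      (tpHom (rAct i) (lActSub i J) s).comp (AddMonoidHom.mk'
        (fun x : I.car => (⟨↑x, h x.2⟩ : J.car)) (by intro x y; rfl))) (by
      intro s s'; ext x
      simp only [AddMonoidHom.coe_comp, Function.comp_apply, AddMonoidHom.mk'_apply,
        AddMonoidHom.add_apply, tpHom_apply]
      exact tp_add_left _ _ _ _ _))
    (by
      intro m b n
      exact tp_rel (rAct i) (lActSub i J) b m ⟨↑n, h n.2⟩)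

/-- The subbimodule `J(g) = {s ∈ S | g(s ⊗ 1) = 1 ⊗ s}` associated to a coring endomorphism. -/
def JSub (i : B →+* S) (g : Sw i →+ Sw i) (hg : IsCoringEnd i g) : Sub i where
  car :=
    { carrier := {s : S | g (swMk i s 1) = swMk i 1 s}
      zero_mem' := by
        have h0 : swMk i (0 : S) 1 = 0 := tp_zero_left _ _ _
        have h0' : swMk i 1 (0 : S) = 0 := tp_zero_right _ _ _
        simp only [Set.mem_setOf_eq, h0, h0', map_zero]
      add_mem' := by
        intro a c ha hc
        simp only [Set.mem_setOf_eq] at *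
        rw [swMk_add_left, map_add, ha, hc, ← swMk_add_right]
      neg_mem' := by
        intro a ha
        simp only [Set.mem_setOf_eq] at *
        rw [swMk_neg_left, map_neg, ha, ← swMk_neg_right] }
  l := by
    intro b x hx
    obtain ⟨-, hl, hr, -⟩ := hg
    show g (swMk i (i b * x) 1) = swMk i 1 (i b * x)
    have h1 : swMk i (i b * x) 1 = lsmul i (i b) (swMk i x 1) := by rw [lsmul_swMk]
    rw [h1, hl, hx, lsmul_swMk, mul_one]
    have h2 := swMk_rel i b 1 x
    rw [one_mul] at h2
    exact h2
  r := by
    intro b x hx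
    obtain ⟨-, hl, hr, -⟩ := hg
    show g (swMk i (x * i b) 1) = swMk i 1 (x * i b)
    have h1 : swMk i (x * i b) 1 = rsmul i (i b) (swMk i x 1) := by
      rw [rsmul_swMk, one_mul, swMk_rel, mul_one]
    rw [h1, hr, hx]
    rfl

/-- The biadditive map underlying `Γ(I)`: `(u ⊗ x, s') ↦ u ⊗ (x s')`. -/
def alphaI (i : B →+* S) (I : Sub i) : TI i I →+ (S →+ Sw i) :=
  liftTP (rAct i) (lActSub i I)
    (AddMonoidHom.mk' (fun u =>
      AddMonoidHom.mk' (fun x : I.car =>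
        AddMonoidHom.mk' (fun t => swMk i u (↑x * t)) (by
          intro t t'; show swMk i u (↑x * (t + t')) = _; rw [mul_add, swMk_add_right])) (by
        intro x y; ext t
        simp only [AddMonoidHom.mk'_apply, AddMonoidHom.add_apply, AddSubgroup.coe_add]
        rw [add_mul, swMk_add_right])) (by
      intro u u'; ext x t
      simp only [AddMonoidHom.mk'_apply, AddMonoidHom.add_apply]
      rw [swMk_add_left]))
    (by
      intro m b n; ext t
      simp only [AddMonoidHom.mk'_apply]
      show swMk i (m * i b) (↑n * t) = swMk i m (↑(lActSub i I b n) * t)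
      rw [swMk_rel]
      congr 1
      show i b * (↑n * t) = (i b * ↑n) * t
      rw [mul_assoc])

@[simp] theorem alphaI_tiMk (i : B →+* S) (I : Sub i) (u : S) (x : I.car) (t : S) :
    alphaI i I (tiMk i I u x) t = swMk i u (↑x * t) := rfl

/-- The right action of `B` on `S ⊗_B I`, through the last factor. -/
def ractTI (i : B →+* S) (I : Sub i) (b : B) : TI i I →+ TI i I :=
  liftTP (rAct i) (lActSub i I)
    (AddMonoidHom.mk' (fun s =>
      AddMonoidHom.mk' (fun x : I.car => tiMk i I s ⟨↑x * i b, I.r b ↑x x.2⟩) (by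
        intro x y
        have hxy : (⟨(↑x + ↑y) * i b, I.r b _ (AddSubgroup.add_mem _ x.2 y.2)⟩ : I.car)
            = ⟨↑x * i b, I.r b ↑x x.2⟩ + ⟨↑y * i b, I.r b ↑y y.2⟩ := by
          ext; simp [add_mul]
        show tiMk i I s ⟨(↑x + ↑y) * i b, _⟩ = _
        rw [hxy]
        exact tp_add_right _ _ _ _ _)) (by
      intro s s'; ext x
      simp only [AddMonoidHom.mk'_apply, AddMonoidHom.add_apply]
      exact tp_add_left _ _ _ _ _))
    (by
      intro m b' n
      show tiMk i I (m * i b') ⟨↑n * i b, _⟩ = tiMk i I m ⟨↑(lActSub i I b' n) * i b, _⟩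
      have := tp_rel (rAct i) (lActSub i I) b' m (⟨↑n * i b, I.r b ↑n n.2⟩ : I.car)
      refine this.trans ?_
      congr 1
      ext
      show i b' * (↑n * i b) = (i b' * ↑n) * i b
      rw [mul_assoc])

theorem mull_ractTI (i : B →+* S) (I : Sub i) (b : B) :
    (mull i I).comp (ractTI i I b) = (AddMonoidHom.mulRight (i b)).comp (mull i I) :=
  hom_ext (rAct i) (lActSub i I) (fun m n => by
    show mull i I (ractTI i I b (tiMk i I m n)) = mull i I (tiMk i I m n) * i b
    show m * (↑n * i b) = (m * ↑n) * i b
    rw [mul_assoc])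

theorem alphaI_ractTI (i : B →+* S) (I : Sub i) (b : B) (z : TI i I) :
    alphaI i I (ractTI i I b z) = (alphaI i I z).comp (AddMonoidHom.mulLeft (i b)) := by
  have h : (alphaI i I).comp (ractTI i I b) =
      (AddMonoidHom.mk' (fun z => (alphaI i I z).comp (AddMonoidHom.mulLeft (i b))) (by
        intro z z'; ext t; simp [map_add])) := by
    refine hom_ext (rAct i) (lActSub i I) (fun m n => ?_)
    ext t
    show swMk i m ((↑n * i b) * t) = swMk i m (↑n * (i b * t))
    rw [mul_assoc]
  exact DFunLike.congr_fun h z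

/-- The coring endomorphism `Γ(I) = (1 ⊗ m^r_I) ∘ ((m^l_I)⁻¹ ⊗ 1)` associated to
`I ∈ I^l_B(S)`. -/
def GammaMap (i : B →+* S) (I : Sub i) (h : Function.Bijective (mull i I)) :
    Sw i →+ Sw i :=
  liftTP (rAct i) (lAct i)
    (AddMonoidHom.mk'
      (fun s => alphaI i I ((AddEquiv.ofBijective (mull i I) h).symm s)) (by
      intro s s'
      show alphaI i I ((AddEquiv.ofBijective (mull i I) h).symm (s + s')) = _
      rw [map_add, map_add]))
    (by
      intro m b n
      show alphaI i I ((AddEquiv.ofBijective (mull i I) h).symm (m * i b)) n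
        = alphaI i I ((AddEquiv.ofBijective (mull i I) h).symm m) (i b * n)
      set e := AddEquiv.ofBijective (mull i I) h with he
      have hsymm : ∀ s, mull i I (e.symm s) = s := fun s => e.apply_symm_apply s
      have e1 : e.symm (m * i b) = ractTI i I b (e.symm m) := by
        apply h.1
        rw [hsymm]
        have := DFunLike.congr_fun (mull_ractTI i I b) (e.symm m)
        simp only [AddMonoidHom.coe_comp, Function.comp_apply, AddMonoidHom.coe_mulRight] at this
        rw [this, hsymm]
      rw [e1, alphaI_ractTI]
      rfl)

end

end Gro


namespace Gro

noncomputable section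

variable {B S : Type} [Ring B] [Ring S]

/-- The unit element of `oneSub i`. -/
def oneElt (i : B →+* S) : (oneSub i).car := ⟨1, ⟨1, map_one i⟩⟩

@[simp] theorem oneElt_val (i : B →+* S) : ((oneElt i : (oneSub i).car) : S) = 1 := rfl

/-- The inverse of `mull i (oneSub i)`. -/
def psi0 (i : B →+* S) : S →+ TI i (oneSub i) :=
  AddMonoidHom.mk' (fun s => tiMk i (oneSub i) s (oneElt i))
    (fun s s' => tp_add_left _ _ _ _ _)

theorem psi0_mull (i : B →+* S) :
    (psi0 i).comp (mull i (oneSub i)) = AddMonoidHom.id _ := by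
  refine hom_ext (rAct i) (lActSub i (oneSub i)) (fun m n => ?_)
  obtain ⟨x, hx⟩ := n
  obtain ⟨b, rfl⟩ := hx
  show tiMk i (oneSub i) (m * i b) (oneElt i) = tiMk i (oneSub i) m ⟨i b, _⟩
  have h := tp_rel (rAct i) (lActSub i (oneSub i)) b m (oneElt i)
  refine h.trans ?_
  congr 1
  exact Subtype.ext (mul_one (i b))

theorem mull_oneSub_bijective (i : B →+* S) : Function.Bijective (mull i (oneSub i)) := by
  refine Function.bijective_iff_has_inverse.2 ⟨psi0 i, fun z => ?_, fun s => ?_⟩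
  · exact DFunLike.congr_fun (psi0_mull i) z
  · show s * ((oneElt i : (oneSub i).car) : S) = s
    simp

theorem mem_mulSub (i : B →+* S) (I J : Sub i) (x : I.car) (y : J.car) :
    (x : S) * (y : S) ∈ (mulSub i I J).car :=
  AddSubgroup.subset_closure ⟨↑x, x.2, ↑y, y.2, rfl⟩

/-- The biadditive map `(u ⊗ x, y) ↦ u ⊗ (x y) : S ⊗ (IJ)`. -/
def betaIJ (i : B →+* S) (I J : Sub i) : TI i I →+ (J.car →+ TI i (mulSub i I J)) :=
  liftTP (rAct i) (lActSub i I)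
    (AddMonoidHom.mk' (fun u => AddMonoidHom.mk' (fun x : I.car =>
      AddMonoidHom.mk' (fun y : J.car =>
          tiMk i (mulSub i I J) u ⟨↑x * ↑y, mem_mulSub i I J x y⟩) (by
        intro y y'
        have h : (⟨↑x * ↑(y + y'), mem_mulSub i I J x (y + y')⟩ : (mulSub i I J).car)
            = ⟨↑x * ↑y, mem_mulSub i I J x y⟩ + ⟨↑x * ↑y', mem_mulSub i I J x y'⟩ := by
          ext; simp [mul_add]
        show tiMk i (mulSub i I J) u ⟨↑x * ↑(y + y'), mem_mulSub i I J x (y + y')⟩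
          = tiMk i (mulSub i I J) u ⟨↑x * ↑y, mem_mulSub i I J x y⟩
            + tiMk i (mulSub i I J) u ⟨↑x * ↑y', mem_mulSub i I J x y'⟩
        rw [h]
        exact tp_add_right _ _ _ _ _)) (by
      intro x x'
      ext y
      simp only [AddMonoidHom.mk'_apply, AddMonoidHom.add_apply]
      have h : (⟨↑(x + x') * ↑y, mem_mulSub i I J (x + x') y⟩ : (mulSub i I J).car)
          = ⟨↑x * ↑y, mem_mulSub i I J x y⟩ + ⟨↑x' * ↑y, mem_mulSub i I J x' y⟩ := by
        ext; simp [add_mul]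
      rw [h]
      exact tp_add_right _ _ _ _ _)) (by
      intro u u'
      ext x y
      simp only [AddMonoidHom.mk'_apply, AddMonoidHom.add_apply]
      exact tp_add_left _ _ _ _ _))
    (by
      intro m b n
      ext y
      simp only [AddMonoidHom.mk'_apply]
      show tiMk i (mulSub i I J) (m * i b) ⟨↑n * ↑y, _⟩
        = tiMk i (mulSub i I J) m ⟨↑(lActSub i I b n) * ↑y, _⟩
      have h := tp_rel (rAct i) (lActSub i (mulSub i I J)) b m
        (⟨↑n * ↑y, mem_mulSub i I J n y⟩ : (mulSub i I J).car)
      refine h.trans ?_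
      congr 1
      exact Subtype.ext (mul_assoc (i b) (↑n) (↑y)).symm)

@[simp] theorem betaIJ_tiMk (i : B →+* S) (I J : Sub i) (u : S) (x : I.car) (y : J.car) :
    betaIJ i I J (tiMk i I u x) y = tiMk i (mulSub i I J) u ⟨↑x * ↑y, mem_mulSub i I J x y⟩ :=
  rfl

theorem mull_betaIJ (i : B →+* S) (I J : Sub i) (y : J.car) :
    (mull i (mulSub i I J)).comp ((betaIJ i I J).flip y)
      = (AddMonoidHom.mulRight (↑y : S)).comp (mull i I) := by
  refine hom_ext (rAct i) (lActSub i I) (fun m n => ?_)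
  show m * (↑n * ↑y) = (m * ↑n) * ↑y
  rw [mul_assoc]

theorem betaIJ_ractTI (i : B →+* S) (I J : Sub i) (b : B) (y : J.car) :
    ((betaIJ i I J).flip y).comp (ractTI i I b) = (betaIJ i I J).flip (lActSub i J b y) := by
  refine hom_ext (rAct i) (lActSub i I) (fun m n => ?_)
  show tiMk i (mulSub i I J) m ⟨(↑n * i b) * ↑y, _⟩
    = tiMk i (mulSub i I J) m ⟨↑n * (i b * ↑y), _⟩
  congr 1
  exact Subtype.ext (mul_assoc (↑n) (i b) (↑y))

/-- The map `S ⊗_B J → S ⊗_B (IJ)`, `s ⊗ y ↦ Σ u_k ⊗ (x_k y)` where `(m^l_I)⁻¹ s = Σ u_k ⊗ x_k`. -/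
def psiIJ (i : B →+* S) (I J : Sub i) (hI : Function.Bijective (mull i I)) :
    TI i J →+ TI i (mulSub i I J) :=
  liftTP (rAct i) (lActSub i J)
    ((betaIJ i I J).comp (AddEquiv.ofBijective (mull i I) hI).symm.toAddMonoidHom)
    (by
      intro m b n
      set e := AddEquiv.ofBijective (mull i I) hI with he
      have hsymm : ∀ s, mull i I (e.symm s) = s := fun s => e.apply_symm_apply s
      have e1 : e.symm (m * i b) = ractTI i I b (e.symm m) := by
        apply hI.1
        rw [hsymm]
        have := DFunLike.congr_fun (mull_ractTI i I b) (e.symm m)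
        simp only [AddMonoidHom.coe_comp, Function.comp_apply, AddMonoidHom.coe_mulRight] at this
        rw [this, hsymm]
      show betaIJ i I J (e.symm (m * i b)) n = betaIJ i I J (e.symm m) (lActSub i J b n)
      rw [e1]
      have h2 := DFunLike.congr_fun (betaIJ_ractTI i I J b n) (e.symm m)
      exact h2)

@[simp] theorem psiIJ_tiMk (i : B →+* S) (I J : Sub i) (hI) (s : S) (y : J.car) :
    psiIJ i I J hI (tiMk i J s y)
      = betaIJ i I J ((AddEquiv.ofBijective (mull i I) hI).symm s) y := rfl

theorem mull_psiIJ (i : B →+* S) (I J : Sub i) (hI : Function.Bijective (mull i I)) :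
    (mull i (mulSub i I J)).comp (psiIJ i I J hI) = mull i J := by
  refine hom_ext (rAct i) (lActSub i J) (fun s y => ?_)
  set e := AddEquiv.ofBijective (mull i I) hI with he
  show mull i (mulSub i I J) (betaIJ i I J (e.symm s) y) = s * ↑y
  have h := DFunLike.congr_fun (mull_betaIJ i I J y) (e.symm s)
  simp only [AddMonoidHom.coe_comp, Function.comp_apply, AddMonoidHom.coe_mulRight] at h
  have h' : mull i (mulSub i I J) (betaIJ i I J (e.symm s) y) = mull i I (e.symm s) * ↑y := h
  rw [h']
  congr 1
  exact e.apply_symm_apply s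

theorem mull_mulSub_bijective (i : B →+* S) (I J : Sub i)
    (hI : Function.Bijective (mull i I)) (hJ : Function.Bijective (mull i J)) :
    Function.Bijective (mull i (mulSub i I J)) := by
  set eI := AddEquiv.ofBijective (mull i I) hI with heI
  set eJ := AddEquiv.ofBijective (mull i J) hJ with heJ
  set Ψ : S →+ TI i (mulSub i I J) := (psiIJ i I J hI).comp eJ.symm.toAddMonoidHom with hΨ
  have hright : ∀ s, mull i (mulSub i I J) (Ψ s) = s := by
    intro s
    have h := DFunLike.congr_fun (mull_psiIJ i I J hI) (eJ.symm s)
    simp only [AddMonoidHom.coe_comp, Function.comp_apply] at h ⊢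
    rw [hΨ]
    simp only [AddMonoidHom.coe_comp, Function.comp_apply, AddEquiv.coe_toAddMonoidHom]
    rw [h]
    exact eJ.apply_symm_apply s
  have hkey : ∀ (u : S) (z : S), z ∈ (mulSub i I J).car →
      ∀ hz : z ∈ (mulSub i I J).car, Ψ (u * z) = tiMk i (mulSub i I J) u ⟨z, hz⟩ := by
    intro u z hz
    induction hz using AddSubgroup.closure_induction with
    | mem w hw =>
      intro hw'
      obtain ⟨a, ha, c, hc, rfl⟩ := hw
      have e1 : eJ.symm (u * (a * c)) = tiMk i J (u * a) ⟨c, hc⟩ := by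
        apply hJ.1
        refine (eJ.apply_symm_apply (u * (a * c)) :
          mull i J (eJ.symm (u * (a * c))) = u * (a * c)).trans ?_
        show u * (a * c) = (u * a) * c
        rw [mul_assoc]
      have e2 : eI.symm (u * a) = tiMk i I u ⟨a, ha⟩ := by
        apply hI.1
        exact (eI.apply_symm_apply (u * a) : mull i I (eI.symm (u * a)) = u * a)
      show psiIJ i I J hI (eJ.symm (u * (a * c))) = _
      rw [e1]
      show betaIJ i I J (eI.symm (u * a)) ⟨c, hc⟩ = _
      rw [e2]
      rfl
    | zero =>
      intro h0
      have : (⟨(0 : S), h0⟩ : (mulSub i I J).car) = 0 := rfl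
      rw [mul_zero, map_zero, this]
      exact (tp_zero_right _ _ _).symm
    | add y z hy hz ihy ihz =>
      intro hyz
      have h1 : (⟨y + z, hyz⟩ : (mulSub i I J).car) = ⟨y, hy⟩ + ⟨z, hz⟩ := rfl
      rw [mul_add, map_add, ihy hy, ihz hz, h1]
      exact (tp_add_right _ _ _ _ _).symm
    | neg y hy ihy =>
      intro hny
      have h1 : (⟨-y, hny⟩ : (mulSub i I J).car) = -⟨y, hy⟩ := rfl
      rw [mul_neg, map_neg, ihy hy, h1]
      exact (map_neg (tpHom (rAct i) (lActSub i (mulSub i I J)) u) _).symm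
  have hleft : ∀ z, Ψ (mull i (mulSub i I J) z) = z := by
    intro z
    have h : Ψ.comp (mull i (mulSub i I J)) = AddMonoidHom.id _ := by
      refine hom_ext (rAct i) (lActSub i (mulSub i I J)) (fun u x => ?_)
      show Ψ (u * ↑x) = tiMk i (mulSub i I J) u x
      exact hkey u ↑x x.2 x.2
    exact DFunLike.congr_fun h z
  exact Function.bijective_iff_has_inverse.2 ⟨Ψ, hleft, hright⟩

end

end Gro

open Gro in
/-- For an injective ring extension `i : B → S`, the subset `I^l_B(S)` of the monoid of
`B`-subbimodules of `S`, consisting of those `I` with `m^l_I : S ⊗_B I → S` bijective,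
is a submonoid: it contains the identity `i(B)` and is closed under multiplication. -/
theorem leftInvertible_subbimodules_submonoid {B S : Type} [Ring B] [Ring S] (i : B →+* S)
    (hi : Function.Injective i) :
    Function.Bijective (mull i (oneSub i)) ∧
    (∀ I J : Sub i, Function.Bijective (mull i I) → Function.Bijective (mull i J) →
      Function.Bijective (mull i (mulSub i I J))) :=
  ⟨mull_oneSub_bijective i, mull_mulSub_bijective i⟩
end

section
/- Let i : B → S be a ring extension with S faithfully flat as a left B-module. Then the functor S ⊗_B - : B-Mod → S-Mod is comonadic. -/
open CategoryTheory CategoryTheory.Limits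

universe u

/-- If `S` is faithfully flat as a left `B`-module (that is, the base-change functor
`S ⊗_B - : B-Mod ⥤ S-Mod` is exact and conservative), then the functor
`S ⊗_B - : B-Mod ⥤ S-Mod` is comonadic. -/
theorem baseChange_comonadic_of_faithfullyFlat
    {B S : Type u} [Ring B] [Ring S] (i : B →+* S)
    (F : ModuleCat.{u} B ⥤ ModuleCat.{u} S)
    (adj : F ⊣ ModuleCat.restrictScalars i)
    [PreservesFiniteLimits F] [F.ReflectsIsomorphisms] :
    Nonempty (ComonadicLeftAdjoint F) := by
  have : Comonad.PreservesLimitOfIsCoreflexivePair F :=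
    ⟨fun _ _ f g _ => inferInstance⟩
  exact ⟨Comonad.comonadicOfHasPreservesCoreflexiveEqualizersOfReflectsIsomorphisms adj⟩
end

section
/- Let i : B → S be a ring extension such that B is a direct summand of S as a B-bimodule. Then the functor S ⊗_B - : B-Mod → S-Mod is comonadic. -/
open CategoryTheory CategoryTheory.Limits

universe u

section General

universe v₁ u₁ u₂

variable {C : Type u₁} {D : Type u₂} [Category.{v₁} C] [Category.{v₁} D]

/-- A left adjoint whose adjunction unit is a split natural monomorphism is comonadic,
provided the source has equalizers. -/
noncomputable def comonadicOfSplitUnit [HasEqualizers C]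
    {F : C ⥤ D} {G : D ⥤ C} (adj : F ⊣ G)
    (ρ : F ⋙ G ⟶ 𝟭 C) (hρ : ∀ X, adj.unit.app X ≫ ρ.app X = 𝟙 X) :
    ComonadicLeftAdjoint F := by
  have ρnat : ∀ {X Y : C} (u : X ⟶ Y), G.map (F.map u) ≫ ρ.app Y = ρ.app X ≫ u := fun u => by
    simpa using ρ.naturality u
  have ηnat : ∀ {X Y : C} (u : X ⟶ Y), u ≫ adj.unit.app Y = adj.unit.app X ≫ G.map (F.map u) :=
    fun u => by simp
  haveI : F.ReflectsIsomorphisms := by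
    constructor
    intro X Y f hf
    haveI : IsIso (G.map (F.map f)) := inferInstance
    refine ⟨⟨adj.unit.app Y ≫ inv (G.map (F.map f)) ≫ ρ.app X, ?_, ?_⟩⟩
    · rw [← Category.assoc, ηnat f, Category.assoc, IsIso.hom_inv_id_assoc]
      exact hρ X
    · simp only [Category.assoc]
      rw [← ρnat f, IsIso.inv_hom_id_assoc]
      exact hρ Y
  haveI : Comonad.HasEqualizerOfIsCosplitPair F := ⟨fun f g _ => inferInstance⟩
  haveI : Comonad.PreservesLimitOfIsCosplitPair F := by
    constructor
    intro A B f g hsplit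
    obtain q := HasSplitEqualizer.isSplitEqualizer (F.map f) (F.map g)
    set ι := HasSplitEqualizer.equalizerι (F.map f) (F.map g) with hι
    have hk : (G.map ι ≫ ρ.app A) ≫ f = (G.map ι ≫ ρ.app A) ≫ g := by
      calc (G.map ι ≫ ρ.app A) ≫ f = G.map (ι ≫ F.map f) ≫ ρ.app B := by
            rw [Category.assoc, ← ρnat f, ← Category.assoc, ← G.map_comp]
        _ = G.map (ι ≫ F.map g) ≫ ρ.app B := by rw [q.condition]
        _ = (G.map ι ≫ ρ.app A) ≫ g := by
            rw [G.map_comp, Category.assoc, ρnat g, Category.assoc]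
    set k : G.obj _ ⟶ equalizer f g := equalizer.lift (G.map ι ≫ ρ.app A) hk with hkdef
    have hke : k ≫ equalizer.ι f g = G.map ι ≫ ρ.app A := equalizer.lift_ι _ _
    have hb : g ≫ (adj.unit.app B ≫ G.map q.rightRetraction ≫ ρ.app A) = 𝟙 A := by
      calc g ≫ adj.unit.app B ≫ G.map q.rightRetraction ≫ ρ.app A
          = adj.unit.app A ≫ G.map (F.map g) ≫ G.map q.rightRetraction ≫ ρ.app A := by
            rw [← Category.assoc, ηnat g, Category.assoc]
        _ = adj.unit.app A ≫ G.map (F.map g ≫ q.rightRetraction) ≫ ρ.app A := by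
            rw [G.map_comp, Category.assoc]
        _ = adj.unit.app A ≫ ρ.app A := by
            rw [q.bottom_rightRetraction]; simp
        _ = 𝟙 A := hρ A
    have ht : f ≫ (adj.unit.app B ≫ G.map q.rightRetraction ≫ ρ.app A)
        = (adj.unit.app A ≫ G.map q.leftRetraction ≫ k) ≫ equalizer.ι f g := by
      calc f ≫ adj.unit.app B ≫ G.map q.rightRetraction ≫ ρ.app A
          = adj.unit.app A ≫ G.map (F.map f) ≫ G.map q.rightRetraction ≫ ρ.app A := by
            rw [← Category.assoc, ηnat f, Category.assoc]
        _ = adj.unit.app A ≫ G.map (F.map f ≫ q.rightRetraction) ≫ ρ.app A := by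
            rw [G.map_comp, Category.assoc]
        _ = adj.unit.app A ≫ G.map (q.leftRetraction ≫ ι) ≫ ρ.app A := by
            rw [q.top_rightRetraction]
        _ = adj.unit.app A ≫ G.map q.leftRetraction ≫ G.map ι ≫ ρ.app A := by
            rw [G.map_comp, Category.assoc]
        _ = (adj.unit.app A ≫ G.map q.leftRetraction ≫ k) ≫ equalizer.ι f g := by
            rw [← hke]; simp only [Category.assoc]
    have hl : equalizer.ι f g ≫ (adj.unit.app A ≫ G.map q.leftRetraction ≫ k) = 𝟙 _ := by
      rw [← cancel_mono (equalizer.ι f g), Category.id_comp, Category.assoc, ← ht,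
        ← Category.assoc, equalizer.condition, Category.assoc, hb, Category.comp_id]
    have sp : IsSplitEqualizer f g (equalizer.ι f g) :=
      { leftRetraction := adj.unit.app A ≫ G.map q.leftRetraction ≫ k
        rightRetraction := adj.unit.app B ≫ G.map q.rightRetraction ≫ ρ.app A
        condition := equalizer.condition f g
        ι_leftRetraction := hl
        bottom_rightRetraction := hb
        top_rightRetraction := ht }
    exact preservesLimit_of_preserves_limit_cone sp.isEqualizer
      ((isLimitMapConeForkEquiv F sp.condition).symm ((sp.map F).isEqualizer))
  exact Comonad.comonadicOfHasPreservesFSplitEqualizersOfReflectsIsomorphisms adj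

end General

section Theta

variable {B S : Type u} [Ring B] [Ring S] (i : B →+* S)
    (p : S →+ B)
    (hpl : ∀ (b : B) (s : S), p (i b * s) = b * p s)
    (hpr : ∀ (b : B) (s : S), p (s * i b) = p s * b)

/-- The natural transformation `X ⟶ Hom_B(S, X)`, `x ↦ (s ↦ p s • x)`. -/
noncomputable def thetaNat : 𝟭 (ModuleCat.{u} B) ⟶
    ModuleCat.coextendScalars i ⋙ ModuleCat.restrictScalars i where
  app X := ModuleCat.ofHom (X := X) (Y := (ModuleCat.restrictScalars i).obj ((ModuleCat.coextendScalars i).obj X))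
    { toFun := fun x =>
        { toFun := fun s : S => p s • x
          map_add' := fun s t => by exact (congrArg (· • x) (map_add p s t)).trans (add_smul _ _ _)
          map_smul' := fun b (s : S) => by
            show p ((i b) * s) • x = b • (p s • x)
            rw [hpl, mul_smul] }
      map_add' := fun x y => LinearMap.ext fun s : S =>
        show p s • (x + y) = p s • x + p s • y from smul_add _ _ _
      map_smul' := fun b x => LinearMap.ext fun s : S => by
        show p s • (b • x) = p (s * i b) • x
        rw [hpr, mul_smul] }
  naturality X Y u := ModuleCat.hom_ext <| LinearMap.ext fun x => LinearMap.ext fun s : S => by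
    exact (map_smul u.hom (p s) x).symm

end Theta

/-- If `B` is a direct summand of `S` as a `B`-bimodule (there is a `B`-bimodule retraction
`p : S → B` of `i`), then the base-change functor `S ⊗_B - : B-Mod ⥤ S-Mod` is comonadic. -/
theorem baseChange_comonadic_of_directSummand
    {B S : Type u} [Ring B] [Ring S] (i : B →+* S)
    (p : S →+ B) (hpi : ∀ b : B, p (i b) = b)
    (hpl : ∀ (b : B) (s : S), p (i b * s) = b * p s)
    (hpr : ∀ (b : B) (s : S), p (s * i b) = p s * b)
    (F : ModuleCat.{u} B ⥤ ModuleCat.{u} S)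
    (adj : F ⊣ ModuleCat.restrictScalars i) :
    Nonempty (ComonadicLeftAdjoint F) := by
  set θ := thetaNat i p hpl hpr with hθ
  set a2 := ModuleCat.restrictCoextendScalarsAdj.{u, u, u} i with ha2
  -- the natural transformation `F ⟶ coextendScalars i` obtained by transposing `θ`
  have phinat : ∀ {X Y : ModuleCat.{u} B} (u : X ⟶ Y),
      F.map u ≫ (adj.homEquiv Y _).symm (θ.app Y)
        = (adj.homEquiv X _).symm (θ.app X) ≫ (ModuleCat.coextendScalars i).map u := by
    intro X Y u
    apply (adj.homEquiv _ _).injective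
    rw [Adjunction.homEquiv_naturality_left, Adjunction.homEquiv_naturality_right,
      Equiv.apply_symm_apply, Equiv.apply_symm_apply]
    simpa using θ.naturality u
  let φ : F ⟶ ModuleCat.coextendScalars i :=
    { app := fun X => (adj.homEquiv X _).symm (θ.app X)
      naturality := fun X Y u => phinat u }
  let ρ : F ⋙ ModuleCat.restrictScalars i ⟶ 𝟭 (ModuleCat.{u} B) :=
    Functor.whiskerRight φ (ModuleCat.restrictScalars i) ≫ a2.counit
  have hρ : ∀ X, adj.unit.app X ≫ ρ.app X = 𝟙 X := by
    intro X
    have h1 : adj.unit.app X ≫ (ModuleCat.restrictScalars i).map (φ.app X) = θ.app X := by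
      have h2 := (adj.homEquiv X ((ModuleCat.coextendScalars i).obj X)).apply_symm_apply (θ.app X)
      rwa [Adjunction.homEquiv_unit] at h2
    show adj.unit.app X ≫ (ModuleCat.restrictScalars i).map (φ.app X) ≫ a2.counit.app X = 𝟙 X
    rw [← Category.assoc, h1]
    refine ModuleCat.hom_ext (LinearMap.ext fun x => ?_)
    show ((θ.app X).hom x).toFun (1 : S) = x
    show p (1 : S) • x = x
    have : p (1 : S) = 1 := by simpa using hpi 1
    rw [this, one_smul]
  exact ⟨comonadicOfSplitUnit adj ρ hρ⟩
end
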